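/- Let p be a prime. For all integers i and j ∈ {0, ..., p-1}, G_{p,2}(ip^2 + j)/p^{p+1} ≡ i (mod p), where G_{p,2}(x) = ∏_{k=0}^{p-1}(F_p(x) - kp) and F_p(x) = x(x-1)···(x-(p-1)). -/

import Mathlib

open Finset

lemma prod_nonzero_eq_neg_one (p : ℕ) [hp : Fact p.Prime] :
    ∏ x ∈ (Finset.univ : Finset (ZMod p)).erase 0, x = -1 := by
  rw [← ZMod.prod_Ico_one_prime (p := p)]
  refine Finset.prod_nbij' (ZMod.val) (fun k => (k : ZMod p)) ?_ ?_ ?_ ?_ ?_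
  · intro a ha
    rw [mem_erase] at ha
    rw [mem_Ico]
    exact ⟨Nat.one_le_iff_ne_zero.2 (fun h => ha.1 (ZMod.val_eq_zero a |>.mp h)),
      ZMod.val_lt a⟩
  · intro b hb
    rw [mem_Ico] at hb
    rw [mem_erase]
    refine ⟨fun h => ?_, mem_univ _⟩
    have h' : (b : ZMod p) = 0 := h
    have := ZMod.val_cast_of_lt hb.2
    rw [h', ZMod.val_zero] at this
    omega
  · intro a _; simp [ZMod.natCast_val, ZMod.cast_id]
  · intro b hb; rw [mem_Ico] at hb; exact ZMod.val_cast_of_lt hb.2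
  · intro a _; simp [ZMod.natCast_val, ZMod.cast_id]

lemma prod_shift (p : ℕ) [NeZero p] (a : ZMod p) :
    ∏ x ∈ (Finset.univ : Finset (ZMod p)).erase a, (a - x)
      = ∏ x ∈ (Finset.univ : Finset (ZMod p)).erase 0, x := by
  refine Finset.prod_nbij' (fun x => a - x) (fun y => a - y) ?_ ?_ ?_ ?_ ?_
  · intro x hx
    rw [mem_erase] at hx ⊢
    exact ⟨fun h => hx.1 (by linear_combination (norm := ring_nf) -h), mem_univ _⟩
  · intro y hy
    rw [mem_erase] at hy ⊢
    exact ⟨fun h => hy.1 (by linear_combination (norm := ring_nf) -h), mem_univ _⟩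
  · intro x _; ring
  · intro y _; ring
  · intro x _; rfl

lemma prod_range_cast (p : ℕ) [NeZero p] (n : ℕ) (hn : n < p) :
    ∏ l ∈ (Finset.range p).erase n, ((n : ZMod p) - (l : ZMod p))
      = ∏ x ∈ (Finset.univ : Finset (ZMod p)).erase ((n : ZMod p)), ((n : ZMod p) - x) := by
  refine Finset.prod_nbij' (fun l => (l : ZMod p)) (ZMod.val) ?_ ?_ ?_ ?_ ?_
  · intro l hl
    rw [mem_erase, mem_range] at hl
    rw [mem_erase]
    refine ⟨fun h => hl.1 ?_, mem_univ _⟩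
    have := congrArg ZMod.val h
    rwa [ZMod.val_cast_of_lt hl.2, ZMod.val_cast_of_lt hn] at this
  · intro x hx
    rw [mem_erase] at hx
    rw [mem_erase, mem_range]
    refine ⟨fun h => hx.1 ?_, ZMod.val_lt x⟩
    have := congrArg (Nat.cast : ℕ → ZMod p) h
    simpa [ZMod.natCast_val, ZMod.cast_id] using this
  · intro l hl
    rw [mem_erase, mem_range] at hl
    exact ZMod.val_cast_of_lt hl.2
  · intro x _; simp [ZMod.natCast_val, ZMod.cast_id]
  · intro l _; rfl

lemma neg_one_pow_pred (p : ℕ) (hp : p.Prime) : ((-1 : ZMod p)) ^ (p - 1) = 1 := by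
  rcases hp.eq_two_or_odd' with h | h
  · subst h; decide
  · have : Even (p - 1) := Nat.Odd.sub_odd h odd_one
    exact this.neg_one_pow

theorem stmt_12 (p : ℕ) (hp : p.Prime) (i : ℤ) (j : ℤ) (hj0 : 0 ≤ j) (hjp : j < (p : ℤ)) :
    (p : ℤ) ∣ ((∏ k ∈ Finset.range p,
        ((∏ l ∈ Finset.range p, (i * p ^ 2 + j - l)) - k * p)) / (p : ℤ) ^ (p + 1) - i) := by
  haveI : Fact p.Prime := ⟨hp⟩
  obtain ⟨n, rfl⟩ : ∃ n : ℕ, j = (n : ℤ) := ⟨j.toNat, (Int.toNat_of_nonneg hj0).symm⟩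
  have hn : n < p := by exact_mod_cast hjp
  have hnmem : n ∈ Finset.range p := mem_range.2 hn
  set A : ℤ := ∏ l ∈ (Finset.range p).erase n, (i * p ^ 2 + n - l) with hA
  have hF : (∏ l ∈ Finset.range p, (i * p ^ 2 + (n : ℤ) - l)) = i * p ^ 2 * A := by
    rw [← Finset.mul_prod_erase _ _ hnmem,
      show i * (p : ℤ) ^ 2 + n - n = i * p ^ 2 by ring]
  set B : ℤ := ∏ k ∈ (Finset.range p).erase 0, (i * p * A - k) with hB
  have hG : (∏ k ∈ Finset.range p,
      ((∏ l ∈ Finset.range p, (i * p ^ 2 + (n : ℤ) - l)) - k * p))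
      = (p : ℤ) ^ (p + 1) * (i * A * B) := by
    rw [hF]
    have h1 : ∀ k ∈ Finset.range p, (i * (p : ℤ) ^ 2 * A - k * p) = p * (i * p * A - k) := by
      intro k _; ring
    rw [Finset.prod_congr rfl h1, Finset.prod_mul_distrib, Finset.prod_const,
      Finset.card_range, ← Finset.mul_prod_erase _ _ (mem_range.2 hp.pos)]
    push_cast
    ring
  rw [hG, Int.mul_ediv_cancel_left _
    (pow_ne_zero _ (Int.natCast_ne_zero.mpr hp.ne_zero))]
  -- now show p ∣ i * A * B - i
  have key : ((A : ZMod p)) * ((B : ZMod p)) = 1 := by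
    have hAc : ((A : ℤ) : ZMod p) = -1 := by
      rw [hA]
      push_cast
      have h2 : ∀ l ∈ (Finset.range p).erase n,
          ((i : ZMod p) * (p : ZMod p) ^ 2 + (n : ZMod p) - (l : ZMod p))
            = ((n : ZMod p) - (l : ZMod p)) := by
        intro l _; rw [ZMod.natCast_self]; ring
      rw [Finset.prod_congr rfl h2, prod_range_cast p n hn, prod_shift,
        prod_nonzero_eq_neg_one p]
    have hBc : ((B : ℤ) : ZMod p) = (-1) ^ (p - 1) * (-1) := by
      rw [hB]
      push_cast
      have h3 : ∀ k ∈ (Finset.range p).erase 0,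
          ((i : ZMod p) * (p : ZMod p) * ((A : ℤ) : ZMod p) - (k : ZMod p))
            = (-1) * (k : ZMod p) := by
        intro k _; rw [ZMod.natCast_self]; ring
      rw [Finset.prod_congr rfl h3, Finset.prod_mul_distrib, Finset.prod_const]
      have hcard : ((Finset.range p).erase 0).card = p - 1 := by
        rw [Finset.card_erase_of_mem (mem_range.2 hp.pos), Finset.card_range]
      rw [hcard]
      congr 1
      rw [Finset.range_eq_Ico, Finset.Ico_erase_left, ← Finset.Ico_add_one_left_eq_Ioo]
      simp
    rw [hAc, hBc, neg_one_pow_pred p hp]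
    ring
  have hz : (((i * A * B - i : ℤ)) : ZMod p) = 0 := by
    push_cast
    rw [mul_assoc, key]
    ring
  exact (ZMod.intCast_zmod_eq_zero_iff_dvd _ _).mp hz
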